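/- Let p be a prime and Q a finite p-group. Suppose there is a chain of subgroups 1 = Q₀ ≤ Q₁ ≤ ⋯ ≤ Q_ℓ = Q, with each Q_i normal in Q, such that each factor group Q_{i+1}/Q_i is elementary abelian of rank at most r (i.e., abelian, of exponent dividing p, and of order at most p^r). Then diam(Q) ≤ 4^(ℓ−1) · (p·r)^ℓ. -/

import Mathlib

open Subgroup

universe u

/-- For a group `G`, `diamLe G L` says that for every generating set `S` of `G`, every
element of `G` is a product of at most `L` elements of `S ∪ S⁻¹`. -/
def diamLe (G : Type*) [Group G] (L : ℕ) : Prop :=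
  ∀ S : Set G, Subgroup.closure S = ⊤ →
    ∀ g : G, ∃ l : List G,
      (∀ x ∈ l, x ∈ S ∨ x⁻¹ ∈ S) ∧ l.length ≤ L ∧ l.prod = g

/-- The diameter `diam G` of a group `G`: the maximum over all generating sets `S` of the
least `L` such that every element of `G` is a product of at most `L` elements of
`S ∪ S⁻¹`, i.e. the least `L` such that `diamLe G L` holds. -/
noncomputable def diam (G : Type*) [Group G] : ℕ :=
  sInf {L | diamLe G L}



section Words

variable {G : Type*} [Group G] {S : Set G}

/-- `g` is a product of at most `L` elements of `S ∪ S⁻¹`. -/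
def IsWord (S : Set G) (L : ℕ) (g : G) : Prop :=
  ∃ l : List G, (∀ x ∈ l, x ∈ S ∨ x⁻¹ ∈ S) ∧ l.length ≤ L ∧ l.prod = g

theorem isWord_one (L : ℕ) : IsWord S L (1 : G) := ⟨[], by simp, by simp, rfl⟩

theorem IsWord.mono {L M : ℕ} {g : G} (h : IsWord S L g) (hLM : L ≤ M) : IsWord S M g := by
  obtain ⟨l, h1, h2, h3⟩ := h
  exact ⟨l, h1, h2.trans hLM, h3⟩

theorem IsWord.mul {L M : ℕ} {g h : G} (hg : IsWord S L g) (hh : IsWord S M h) :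
    IsWord S (L + M) (g * h) := by
  obtain ⟨l, l1, l2, rfl⟩ := hg
  obtain ⟨m, m1, m2, rfl⟩ := hh
  refine ⟨l ++ m, ?_, by simpa using Nat.add_le_add l2 m2, by simp⟩
  intro x hx
  rcases List.mem_append.mp hx with hx | hx
  · exact l1 x hx
  · exact m1 x hx

theorem IsWord.inv {L : ℕ} {g : G} (h : IsWord S L g) : IsWord S L g⁻¹ := by
  obtain ⟨l, h1, h2, rfl⟩ := h
  refine ⟨(l.map fun x => x⁻¹).reverse, ?_, by simpa using h2,
    (List.prod_inv_reverse l).symm⟩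
  intro x hx
  rw [List.mem_reverse, List.mem_map] at hx
  obtain ⟨y, hy, rfl⟩ := hx
  rcases h1 y hy with h | h
  · exact Or.inr (by simpa using h)
  · exact Or.inl h

theorem isWord_of_mem {g : G} (h : g ∈ S ∨ g⁻¹ ∈ S) : IsWord S 1 g :=
  ⟨[g], by simpa using h, by simp, by simp⟩

theorem isWord_list_prod {c : ℕ} :
    ∀ l : List G, (∀ x ∈ l, IsWord S c x) → IsWord S (c * l.length) l.prod
  | [] => fun _ => by simpa using isWord_one 0
  | x :: l => fun h => by
    have hx := h x List.mem_cons_self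
    have hl := isWord_list_prod l fun y hy => h y (List.mem_cons_of_mem _ hy)
    have := hx.mul hl
    rw [List.prod_cons]
    exact (hx.mul hl).mono (by simp [List.length_cons, Nat.mul_succ, Nat.mul_add]; ring_nf; omega)

theorem exists_isWord_of_mem_closure {g : G} (h : g ∈ Subgroup.closure S) :
    ∃ L : ℕ, IsWord S L g := by
  induction h using Subgroup.closure_induction with
  | mem x hx => exact ⟨1, isWord_of_mem (Or.inl hx)⟩
  | one => exact ⟨0, isWord_one 0⟩
  | mul x y hx hy ihx ihy =>
    obtain ⟨L, hL⟩ := ihx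
    obtain ⟨M, hM⟩ := ihy
    exact ⟨L + M, hL.mul hM⟩
  | inv x hx ihx =>
    obtain ⟨L, hL⟩ := ihx
    exact ⟨L, hL.inv⟩

/-- Lifting of words along a homomorphism. -/
theorem exists_word_lift {H : Type*} [Group H] (π : G →* H) (S : Set G) :
    ∀ l : List H, (∀ x ∈ l, x ∈ π '' S ∨ x⁻¹ ∈ π '' S) →
      ∃ m : List G, (∀ x ∈ m, x ∈ S ∨ x⁻¹ ∈ S) ∧ m.length = l.length ∧ π m.prod = l.prod
  | [] => fun _ => ⟨[], by simp, rfl, by simp⟩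
  | x :: l => fun h => by
    obtain ⟨m, hm1, hm2, hm3⟩ :=
      exists_word_lift π S l fun y hy => h y (List.mem_cons_of_mem _ hy)
    rcases h x List.mem_cons_self with ⟨s, hs, hsx⟩ | ⟨s, hs, hsx⟩
    · refine ⟨s :: m, ?_, by simp [hm2], by simp [hm3, hsx]⟩
      intro y hy
      rcases List.mem_cons.mp hy with rfl | hy
      · exact Or.inl hs
      · exact hm1 y hy
    · refine ⟨s⁻¹ :: m, ?_, by simp [hm2], ?_⟩
      · intro y hy
        rcases List.mem_cons.mp hy with rfl | hy
        · exact Or.inr (by simpa using hs)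
        · exact hm1 y hy
      · have : π s⁻¹ = x := by rw [map_inv, hsx, inv_inv]
        simp [hm3, this]

end Words




/-- Every generating set of a finite "elementary abelian" group of order at most `p ^ r`
expresses every element as a word of length at most `p * r`. -/
theorem elemAbelian_word (p : ℕ) (hp : p.Prime) :
    ∀ r : ℕ, ∀ (N : Type u) (_ : Group N) (_ : Finite N),
      (∀ a b : N, a * b = b * a) → (∀ a : N, a ^ p = 1) → Nat.card N ≤ p ^ r →
      ∀ T : Set N, Subgroup.closure T = ⊤ → ∀ g : N, IsWord T (p * r) g := by
  intro r
  induction r with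
  | zero =>
    intro N _ _ _ _ hcard T hT g
    have h1 : Nat.card N = 1 :=
      le_antisymm (by simpa using hcard) Nat.card_pos
    have : Subsingleton N := (Nat.card_eq_one_iff_unique.mp h1).1
    have : g = 1 := Subsingleton.elim g 1
    rw [this]
    exact isWord_one _
  | succ r ih =>
    intro N _ _ hc he hcard T hT g
    by_cases hex : ∃ t ∈ T, t ≠ (1 : N)
    · obtain ⟨t, htT, ht1⟩ := hex
      have hordt : orderOf t = p := by
        rcases (Nat.Prime.eq_one_or_self_of_dvd hp _
          (orderOf_dvd_of_pow_eq_one (he t))) with h | h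
        · exact absurd (orderOf_eq_one_iff.mp h) ht1
        · exact h
      set H := Subgroup.zpowers t with hH
      haveI hHn : H.Normal := by
        constructor
        intro n hn g
        have : g * n * g⁻¹ = n := by rw [hc g n, mul_assoc, mul_inv_cancel, mul_one]
        rwa [this]
      set π := QuotientGroup.mk' H with hπ
      have hsurj : Function.Surjective π := QuotientGroup.mk'_surjective H
      have hc' : ∀ a b : N ⧸ H, a * b = b * a := by
        intro a b
        obtain ⟨a, rfl⟩ := hsurj a
        obtain ⟨b, rfl⟩ := hsurj b
        rw [← map_mul, ← map_mul, hc]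
      have he' : ∀ a : N ⧸ H, a ^ p = 1 := by
        intro a
        obtain ⟨a, rfl⟩ := hsurj a
        rw [← map_pow, he, map_one]
      have hcard' : Nat.card (N ⧸ H) ≤ p ^ r := by
        have hcards : Nat.card N = Nat.card (N ⧸ H) * Nat.card H :=
          Subgroup.card_eq_card_quotient_mul_card_subgroup H
        have hcH : Nat.card H = p := by rw [hH, Nat.card_zpowers, hordt]
        have : Nat.card (N ⧸ H) * p ≤ p ^ r * p := by
          rw [← pow_succ]
          calc Nat.card (N ⧸ H) * p = Nat.card N := by rw [hcards, hcH]
          _ ≤ p ^ (r + 1) := hcard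
        exact Nat.le_of_mul_le_mul_right this hp.pos
      have hT' : Subgroup.closure (π '' T) = ⊤ := by
        rw [← MonoidHom.map_closure, hT, Subgroup.map_top_of_surjective _ hsurj]
      have hword := ih (N ⧸ H) inferInstance inferInstance hc' he' hcard' (π '' T) hT' (π g)
      obtain ⟨lb, hlb1, hlb2, hlb3⟩ := hword
      obtain ⟨m, hm1, hm2, hm3⟩ := exists_word_lift π T lb hlb1
      have hmem : m.prod⁻¹ * g ∈ H := by
        rw [← QuotientGroup.ker_mk' H]
        have : π (m.prod⁻¹ * g) = 1 := by
          rw [map_mul, map_inv, hm3, hlb3, inv_mul_cancel]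
        exact this
      have hfin : IsOfFinOrder t := orderOf_pos_iff.mp (hordt ▸ hp.pos)
      obtain ⟨n, hn⟩ := (Submonoid.mem_powers_iff _ _).mp
        (hfin.mem_powers_iff_mem_zpowers.mpr hmem)
      have hkey : t ^ (n % p) = m.prod⁻¹ * g := by
        rw [← hordt, pow_mod_orderOf]; exact hn
      refine ⟨m ++ List.replicate (n % p) t, ?_, ?_, ?_⟩
      · intro x hx
        rcases List.mem_append.mp hx with hx | hx
        · exact hm1 x hx
        · rw [List.eq_of_mem_replicate hx]
          exact Or.inl htT
      · rw [List.length_append, List.length_replicate, hm2]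
        have h1 : lb.length ≤ p * r := hlb2
        have h2 : n % p ≤ p - 1 := by
          have := Nat.mod_lt n hp.pos
          omega
        have := hp.two_le
        calc lb.length + n % p ≤ p * r + (p - 1) := Nat.add_le_add h1 h2
        _ ≤ p * (r + 1) := by rw [Nat.mul_add, Nat.mul_one]; omega
      · rw [List.prod_append, List.prod_replicate, hkey, ← mul_assoc,
          mul_inv_cancel, one_mul]
    · push_neg at hex
      have hle : Subgroup.closure T ≤ ⊥ := (Subgroup.closure_le ⊥).mpr fun x hx => by
        simp [hex x hx]
      have : g ∈ (⊥ : Subgroup N) := hle (hT ▸ Subgroup.mem_top g)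
      rw [Subgroup.mem_bot.mp this]
      exact isWord_one _



/-- Schreier-type generation: if every element of `G` lies within distance `k` (in word
metric w.r.t. `S`) of the subgroup `N`, then `N` is generated by its elements that are
words of length at most `2 * k + 1`. -/
theorem schreier_closure {G : Type*} [Group G] {S : Set G} (hS : Subgroup.closure S = ⊤)
    (N : Subgroup G) (k : ℕ)
    (hrep : ∀ g : G, ∃ w : G, IsWord S k w ∧ w⁻¹ * g ∈ N) :
    Subgroup.closure {n : ↥N | IsWord S (2 * k + 1) ↑n} = ⊤ := by
  set T := {n : ↥N | IsWord S (2 * k + 1) ↑n} with hTdef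
  have key : ∀ l : List G, (∀ x ∈ l, x ∈ S ∨ x⁻¹ ∈ S) →
      ∃ w : G, IsWord S k w ∧ w⁻¹ * l.prod ∈ (Subgroup.closure T).map N.subtype := by
    intro l
    induction l with
    | nil =>
      intro _
      obtain ⟨w, hw, hwN⟩ := hrep 1
      refine ⟨w, hw, ?_⟩
      rw [List.prod_nil]
      refine ⟨⟨w⁻¹ * 1, hwN⟩, Subgroup.subset_closure ?_, rfl⟩
      show IsWord S (2 * k + 1) ((⟨w⁻¹ * 1, hwN⟩ : ↥N) : G)
      have : ((⟨w⁻¹ * 1, hwN⟩ : ↥N) : G) = w⁻¹ := by simp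
      rw [this]
      exact hw.inv.mono (by omega)
    | cons s l ih =>
      intro h
      obtain ⟨w, hw, hm⟩ := ih fun x hx => h x (List.mem_cons_of_mem _ hx)
      obtain ⟨x, hx, hxe⟩ := hm
      obtain ⟨w', hw', hn⟩ := hrep (s * w)
      refine ⟨w', hw', ?_⟩
      have hword : IsWord S (2 * k + 1) (w'⁻¹ * (s * w)) :=
        (hw'.inv.mul ((isWord_of_mem (h s List.mem_cons_self)).mul hw)).mono (by omega)
      have htm : (⟨w'⁻¹ * (s * w), hn⟩ : ↥N) ∈ T := hword
      refine ⟨⟨w'⁻¹ * (s * w), hn⟩ * x, mul_mem (Subgroup.subset_closure htm) hx, ?_⟩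
      have hxe' : (N.subtype x : G) = w⁻¹ * l.prod := hxe
      show (w'⁻¹ * (s * w)) * (N.subtype x : G) = w'⁻¹ * (s :: l).prod
      rw [hxe', List.prod_cons]
      group
  rw [eq_top_iff]
  intro n _
  have hn : (n : G) ∈ Subgroup.closure S := hS ▸ Subgroup.mem_top _
  obtain ⟨L, l, hl, _, hprod⟩ := exists_isWord_of_mem_closure hn
  obtain ⟨w, hw, hm⟩ := key l hl
  rw [hprod] at hm
  obtain ⟨x, hx, hxe⟩ := hm
  have hxe' : (x : G) = w⁻¹ * (n : G) := hxe
  have hwN : w ∈ N := by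
    have hweq : w = (n : G) * (x : G)⁻¹ := by rw [hxe']; group
    rw [hweq]
    exact mul_mem n.2 (inv_mem x.2)
  have hwT : (⟨w, hwN⟩ : ↥N) ∈ T := hw.mono (by omega)
  have : n = ⟨w, hwN⟩ * x := by
    ext
    show (n : G) = w * (x : G)
    rw [hxe']
    group
  rw [this]
  exact mul_mem (Subgroup.subset_closure hwT) hx




/-- Recursive diameter bound along a chain of length `ℓ`. -/
def chainBound (p r : ℕ) : ℕ → ℕ
  | 0 => 0
  | ℓ + 1 => p * r + (2 * (p * r) + 1) * chainBound p r ℓ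

theorem chainBound_le (p r ℓ : ℕ) : chainBound p r ℓ ≤ 4 ^ (ℓ - 1) * (p * r) ^ ℓ := by
  set m := p * r with hm
  have key : ∀ n : ℕ, chainBound p r (n + 1) ≤ 4 ^ n * m ^ (n + 1) := by
    intro n
    induction n with
    | zero => simp [chainBound, hm]
    | succ n ih =>
      have hstep : chainBound p r (n + 2) = m + (2 * m + 1) * chainBound p r (n + 1) := rfl
      rcases Nat.eq_zero_or_pos m with h0 | h1
      · rw [hstep, h0]
        simp only [h0] at ih
        simp only [Nat.zero_pow (Nat.succ_pos _), Nat.mul_zero] at ih ⊢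
        omega
      · have h2 : 2 * m + 1 ≤ 3 * m := by omega
        have h3 : (1 : ℕ) ≤ 4 ^ n * m ^ (n + 1) :=
          Nat.one_le_iff_ne_zero.mpr (by positivity)
        calc chainBound p r (n + 2) = m + (2 * m + 1) * chainBound p r (n + 1) := hstep
          _ ≤ m + (3 * m) * (4 ^ n * m ^ (n + 1)) := by
              exact Nat.add_le_add_left (Nat.mul_le_mul h2 ih) m
          _ ≤ (4 ^ n * m ^ (n + 1)) * m + (3 * m) * (4 ^ n * m ^ (n + 1)) := by
              exact Nat.add_le_add_right (Nat.le_mul_of_pos_left m h3 |>.trans (by ring_nf; exact le_rfl)) _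
          _ = 4 ^ n * m ^ (n + 2) + 3 * (4 ^ n * m ^ (n + 2)) := by ring
          _ = 4 ^ (n + 1) * m ^ (n + 2) := by ring
  cases ℓ with
  | zero => simp [chainBound]
  | succ n => simpa using key n

theorem main_chain (p : ℕ) (hp : p.Prime) (r : ℕ) :
    ∀ ℓ : ℕ, ∀ (Q : Type u) (_ : Group Q) (_ : Finite Q) (C : ℕ → Subgroup Q),
      C 0 = ⊥ → C ℓ = ⊤ → (∀ i < ℓ, C i ≤ C (i + 1)) → (∀ i ≤ ℓ, (C i).Normal) →
      (∀ i < ℓ, ∀ a ∈ C (i + 1), ∀ b ∈ C (i + 1), a * b * a⁻¹ * b⁻¹ ∈ C i) →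
      (∀ i < ℓ, ∀ a ∈ C (i + 1), a ^ p ∈ C i) →
      (∀ i < ℓ, (C i).relIndex (C (i + 1)) ≤ p ^ r) →
      diamLe Q (chainBound p r ℓ) := by
  intro ℓ
  induction ℓ with
  | zero =>
    intro Q _ _ C h0 hl _ _ _ _ _ S hS g
    have : g ∈ (⊥ : Subgroup Q) := by rw [← h0, hl]; exact Subgroup.mem_top g
    exact ⟨[], by simp, by simp, by simp [Subgroup.mem_bot.mp this]⟩
  | succ ℓ ih =>
    intro Q _ _ C h0 hl hmono hnorm hcomm hexp hord S hS g
    set k := p * r with hk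
    set N := C ℓ with hN
    haveI hNn : N.Normal := hnorm ℓ (by omega)
    set π := QuotientGroup.mk' N with hπ
    have hsurj : Function.Surjective π := QuotientGroup.mk'_surjective N
    have htop : ∀ a : Q, a ∈ C (ℓ + 1) := fun a => hl ▸ Subgroup.mem_top a
    -- the quotient is elementary abelian of order at most p ^ r
    have hc' : ∀ a b : Q ⧸ N, a * b = b * a := by
      intro a b
      obtain ⟨a, rfl⟩ := hsurj a
      obtain ⟨b, rfl⟩ := hsurj b
      have hmem := hcomm ℓ (by omega) b⁻¹ (htop _) a⁻¹ (htop _)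
      have heq : (a * b)⁻¹ * (b * a) = b⁻¹ * a⁻¹ * b⁻¹⁻¹ * a⁻¹⁻¹ := by group
      have : ((a * b : Q) : Q ⧸ N) = ((b * a : Q) : Q ⧸ N) :=
        (QuotientGroup.eq (s := N)).mpr (by rw [heq]; exact hmem)
      simpa [hπ, QuotientGroup.mk'_apply, map_mul] using this
    have he' : ∀ a : Q ⧸ N, a ^ p = 1 := by
      intro a
      obtain ⟨a, rfl⟩ := hsurj a
      have : π a ^ p = π (a ^ p) := by rw [map_pow]
      rw [this]
      exact (QuotientGroup.eq_one_iff _).mpr (hexp ℓ (by omega) a (htop a))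
    have hcard' : Nat.card (Q ⧸ N) ≤ p ^ r := by
      have h1 := hord ℓ (by omega)
      rw [hl, Subgroup.relIndex_top_right] at h1
      exact h1
    have hTgen : Subgroup.closure (π '' S) = ⊤ := by
      rw [← MonoidHom.map_closure, hS, Subgroup.map_top_of_surjective _ hsurj]
    -- representatives of cosets of N by words of length at most k
    have hrep : ∀ q : Q, ∃ w : Q, IsWord S k w ∧ w⁻¹ * q ∈ N := by
      intro q
      obtain ⟨lb, hlb1, hlb2, hlb3⟩ := elemAbelian_word p hp r (Q ⧸ N) inferInstance
        inferInstance hc' he' hcard' (π '' S) hTgen (π q)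
      obtain ⟨m, hm1, hm2, hm3⟩ := exists_word_lift π S lb hlb1
      refine ⟨m.prod, ⟨m, hm1, by omega, rfl⟩, ?_⟩
      rw [← QuotientGroup.ker_mk' N]
      show π (m.prod⁻¹ * q) = 1
      rw [map_mul, map_inv, hm3, hlb3, inv_mul_cancel]
    -- N is generated by short words
    set T := {n : ↥N | IsWord S (2 * k + 1) ↑n} with hT
    have hTN : Subgroup.closure T = ⊤ := schreier_closure hS N k hrep
    -- chain monotonicity
    have hchain : ∀ j, j ≤ ℓ + 1 → ∀ i, i ≤ j → C i ≤ C j := by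
      intro j
      induction j with
      | zero => intro _ i hi; interval_cases i; exact le_rfl
      | succ j ihj =>
        intro hj i hi
        rcases Nat.eq_or_lt_of_le hi with rfl | hi'
        · exact le_rfl
        · exact (ihj (by omega) i (by omega)).trans (hmono j (by omega))
    -- induction hypothesis applied to N with the truncated chain
    have hdiamN : diamLe ↥N (chainBound p r ℓ) := by
      have f1 : (C 0).subgroupOf N = ⊥ := by rw [h0, Subgroup.bot_subgroupOf]
      have f2 : (C ℓ).subgroupOf N = ⊤ := Subgroup.subgroupOf_self N
      have f3 : ∀ i < ℓ, (C i).subgroupOf N ≤ (C (i + 1)).subgroupOf N := fun i hi =>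
        Subgroup.comap_mono (hmono i (by omega))
      have f4 : ∀ i ≤ ℓ, ((C i).subgroupOf N).Normal := by
        intro i hi
        haveI := hnorm i (by omega)
        infer_instance
      have f5 : ∀ i < ℓ, ∀ a ∈ (C (i + 1)).subgroupOf N, ∀ b ∈ (C (i + 1)).subgroupOf N,
          a * b * a⁻¹ * b⁻¹ ∈ (C i).subgroupOf N := by
        intro i hi a ha b hb
        rw [Subgroup.mem_subgroupOf] at ha hb ⊢
        exact hcomm i (by omega) a ha b hb
      have f6 : ∀ i < ℓ, ∀ a ∈ (C (i + 1)).subgroupOf N, a ^ p ∈ (C i).subgroupOf N := by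
        intro i hi a ha
        rw [Subgroup.mem_subgroupOf] at ha ⊢
        rw [SubmonoidClass.coe_pow]
        exact hexp i (by omega) a ha
      have f7 : ∀ i < ℓ, ((C i).subgroupOf N).relIndex ((C (i + 1)).subgroupOf N) ≤ p ^ r := by
        intro i hi
        rw [Subgroup.relIndex_subgroupOf (hchain ℓ (by omega) (i + 1) (by omega))]
        exact hord i (by omega)
      exact ih ↥N inferInstance inferInstance (fun i => (C i).subgroupOf N) f1 f2 f3 f4 f5 f6 f7
    -- assemble the word for g
    obtain ⟨w, hw, hn⟩ := hrep g
    obtain ⟨l, hl1, hl2, hl3⟩ := hdiamN T hTN ⟨w⁻¹ * g, hn⟩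
    have hentry : ∀ y ∈ l.map N.subtype, IsWord S (2 * k + 1) y := by
      intro y hy
      rw [List.mem_map] at hy
      obtain ⟨x, hx, rfl⟩ := hy
      rcases hl1 x hx with h | h
      · exact h
      · have : IsWord S (2 * k + 1) ((N.subtype x)⁻¹) := by
          have := h
          rw [hT, Set.mem_setOf_eq] at this
          simpa using this
        simpa using this.inv
    have hprodl : (l.map N.subtype).prod = w⁻¹ * g := by
      rw [← MonoidHom.map_list_prod, hl3]
      rfl
    have hword2 : IsWord S ((2 * k + 1) * chainBound p r ℓ) (w⁻¹ * g) := by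
      rw [← hprodl]
      exact (isWord_list_prod _ hentry).mono
        (Nat.mul_le_mul_left _ (by simpa using hl2))
    have hfin := hw.mul hword2
    have hg : w * (w⁻¹ * g) = g := by group
    rw [hg] at hfin
    show IsWord S (p * r + (2 * (p * r) + 1) * chainBound p r ℓ) g
    exact hfin

/-- Let `p` be a prime and `Q` a finite `p`-group admitting a chain of
normal subgroups `⊥ = C 0 ≤ C 1 ≤ ⋯ ≤ C ℓ = ⊤` whose successive factors `C (i+1) / C i`
are elementary abelian of rank at most `r` (i.e. abelian, of exponent dividing `p`, of
order at most `p ^ r`). Then `diam Q ≤ 4 ^ (ℓ - 1) * (p * r) ^ ℓ`. -/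
theorem diam_p_group_of_chain
    (p : ℕ) (hp : p.Prime)
    (Q : Type*) [Group Q] [Finite Q] (hQ : IsPGroup p Q)
    (ℓ r : ℕ) (C : ℕ → Subgroup Q)
    (h0 : C 0 = ⊥) (hℓ : C ℓ = ⊤)
    (hmono : ∀ i < ℓ, C i ≤ C (i + 1))
    (hnorm : ∀ i ≤ ℓ, (C i).Normal)
    (hcomm : ∀ i < ℓ, ∀ a ∈ C (i + 1), ∀ b ∈ C (i + 1), a * b * a⁻¹ * b⁻¹ ∈ C i)
    (hexp : ∀ i < ℓ, ∀ a ∈ C (i + 1), a ^ p ∈ C i)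
    (hord : ∀ i < ℓ, (C i).relIndex (C (i + 1)) ≤ p ^ r) :
    diam Q ≤ 4 ^ (ℓ - 1) * (p * r) ^ ℓ := by
  have hB : diamLe Q (chainBound p r ℓ) :=
    main_chain p hp r ℓ Q inferInstance inferInstance C h0 hℓ hmono hnorm hcomm hexp hord
  have hle : chainBound p r ℓ ≤ 4 ^ (ℓ - 1) * (p * r) ^ ℓ := chainBound_le p r ℓ
  have hmem : diamLe Q (4 ^ (ℓ - 1) * (p * r) ^ ℓ) := by
    intro S hS g
    obtain ⟨l, h1, h2, h3⟩ := hB S hS g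
    exact ⟨l, h1, h2.trans hle, h3⟩
  exact Nat.sInf_le hmem
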